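/- For all real numbers λ ≥ 0 and λ' ≥ 0, P_λ a-majorizes P_{λ'} if and only if λ ≥ λ'. Equivalently, the sequence P_λ * P_{−λ'} = P_{λ−λ'} is nonnegative at every integer if and only if λ ≥ λ'. -/

import Mathlib

/-- Convolution of two sequences on `ℤ`: `(a*b)(n) = ∑_{k∈ℤ} a(k)·b(n−k)`.
For supported-below sequences this `tsum` has finitely many nonzero terms. -/
noncomputable def conv (a b : ℤ → ℝ) : ℤ → ℝ := fun n => ∑' k : ℤ, a k * b (n - k)

/-- A sequence is supported below if it vanishes for all sufficiently negative indices. -/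
def SuppBelow (a : ℤ → ℝ) : Prop := ∃ N : ℤ, ∀ n : ℤ, n < N → a n = 0

/-- A probability distribution on `ℤ`: nonnegative with total sum 1. -/
def IsProbDist (p : ℤ → ℝ) : Prop := (∀ n : ℤ, 0 ≤ p n) ∧ HasSum p 1

/-- `qt` is the reciprocal sequence `q̃` of `q`, relative to `nstar = n_*(q)`,
the least index where `q` is positive: `q̃` vanishes below `−n_*(q)` and
`(q̃*q)(n) = δ_{n,0}` for all `n`. -/
def IsRecip (q qt : ℤ → ℝ) (nstar : ℤ) : Prop :=
  IsLeast {n : ℤ | 0 < q n} nstar ∧ (∀ n : ℤ, n < -nstar → qt n = 0) ∧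
  (∀ n : ℤ, conv qt q n = if n = 0 then (1 : ℝ) else 0)

/-- The generalized Poisson sequence `P_λ : ℤ → ℝ`,
`P_λ(n) = e^{−λ}·λ^n/n!` for `n ≥ 0` and `P_λ(n) = 0` for `n < 0`. -/
noncomputable def poisson (lam : ℝ) : ℤ → ℝ :=
  fun n => if 0 ≤ n then Real.exp (-lam) * lam ^ n.toNat / (Nat.factorial n.toNat : ℝ) else 0

lemma conv_poisson (a b : ℝ) (n : ℤ) :
    conv (poisson a) (poisson b) n = poisson (a + b) n := by
  unfold conv
  rcases lt_or_ge n 0 with hn | hn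
  · have h0 : ∀ k : ℤ, poisson a k * poisson b (n - k) = 0 := by
      intro k
      rcases lt_or_ge k 0 with hk | hk
      · simp [poisson, not_le.mpr hk]
      · have : n - k < 0 := by omega
        simp [poisson, not_le.mpr this]; intro h; omega
    rw [tsum_congr h0, tsum_zero]
    simp [poisson, not_le.mpr hn]
  · set m := n.toNat with hm
    have hnm : n = (m : ℤ) := by omega
    rw [tsum_eq_sum (s := Finset.Icc (0:ℤ) n) (by
      intro k hk
      simp only [Finset.mem_Icc, not_and_or, not_le] at hk
      rcases hk with hk | hk
      · simp [poisson, not_le.mpr hk]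
      · have : n - k < 0 := by omega
        simp [poisson, not_le.mpr this]; intro h; omega)]
    have hs : Finset.Icc (0:ℤ) n = (Finset.range (m+1)).image (fun j : ℕ => (j:ℤ)) := by
      ext k
      simp only [Finset.mem_Icc, Finset.mem_image, Finset.mem_range]
      constructor
      · rintro ⟨h1, h2⟩; exact ⟨k.toNat, by omega, by omega⟩
      · rintro ⟨j, hj, rfl⟩; omega
    rw [hs, Finset.sum_image (by intro x _ y _ h; simpa using h)]
    have hterm : ∀ j ∈ Finset.range (m+1),
        poisson a (j:ℤ) * poisson b (n - (j:ℤ)) =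
        Real.exp (-a) * Real.exp (-b) * (a ^ j * b ^ (m - j) * (m.choose j : ℝ)) / (m.factorial : ℝ) := by
      intro j hj
      rw [Finset.mem_range] at hj
      have hjm : j ≤ m := by omega
      have h1 : ((j:ℤ)).toNat = j := by omega
      have h2 : (n - (j:ℤ)).toNat = m - j := by omega
      have h3 : (0:ℤ) ≤ n - j := by omega
      simp only [poisson, Int.natCast_nonneg, if_pos, h1, h2, if_pos h3]
      have hc : ((m.choose j : ℝ)) * (j.factorial : ℝ) * ((m - j).factorial : ℝ) = (m.factorial : ℝ) := by
        exact_mod_cast Nat.choose_mul_factorial_mul_factorial hjm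
      have hj0 : (j.factorial : ℝ) ≠ 0 := by positivity
      have hj1 : ((m - j).factorial : ℝ) ≠ 0 := by positivity
      have hcp : (0:ℝ) < (m.choose j : ℝ) := by exact_mod_cast Nat.choose_pos hjm
      rw [← hc]
      field_simp
    rw [Finset.sum_congr rfl hterm]
    have : poisson (a+b) n = Real.exp (-(a+b)) * (a+b) ^ m / (m.factorial : ℝ) := by
      simp [poisson, if_pos hn]; rfl
    rw [this, add_pow]
    have he : Real.exp (-(a+b)) = Real.exp (-a) * Real.exp (-b) := by
      rw [← Real.exp_add]; ring_nf
    rw [he, Finset.mul_sum, Finset.sum_div]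

lemma poisson_nonneg {mu : ℝ} (hmu : 0 ≤ mu) (n : ℤ) : 0 ≤ poisson mu n := by
  unfold poisson
  split
  · positivity
  · exact le_refl 0


/-- for `λ, λ' ≥ 0`, `P_λ` a-majorizes `P_{λ'}` iff `λ ≥ λ'`
(using `P̃_{λ'} = P_{−λ'}`); equivalently, the sequence
`P_λ * P_{−λ'} = P_{λ−λ'}` is nonnegative everywhere iff `λ ≥ λ'`. -/
theorem poisson_amaj_iff (lam lam' : ℝ) (hlam : 0 ≤ lam) (hlam' : 0 ≤ lam') :
    ((∀ n : ℤ, 0 ≤ conv (poisson lam) (poisson (-lam')) n) ↔ lam' ≤ lam) ∧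
    ((∀ n : ℤ, 0 ≤ poisson (lam - lam') n) ↔ lam' ≤ lam) := by
  have key : (∀ n : ℤ, 0 ≤ poisson (lam - lam') n) ↔ lam' ≤ lam := by
    constructor
    · intro h
      have h1 := h 1
      have : poisson (lam - lam') 1 = Real.exp (-(lam - lam')) * (lam - lam') := by
        simp [poisson]
      rw [this] at h1
      have he := Real.exp_pos (-(lam - lam'))
      nlinarith
    · intro h n
      exact poisson_nonneg (by linarith) n
  refine ⟨?_, key⟩
  have hc : ∀ n : ℤ, conv (poisson lam) (poisson (-lam')) n = poisson (lam - lam') n := by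
    intro n
    rw [conv_poisson]
    ring_nf
  simp only [hc]
  exact key
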